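/- Let 𝒳 and 𝒴 be bounded subsets of the Gromov–Hausdorff space M. Then there exists a map f : 𝒳 × 𝒴 → M such that for all X, X' ∈ 𝒳 and Y, Y' ∈ 𝒴, d_GH(f(X,Y), f(X',Y')) = max(d_GH(X,X'), d_GH(Y,Y')); that is, the product 𝒳 × 𝒴 equipped with the ℓ∞ (maximum) product distance embeds isometrically into M. -/

import Mathlib

open GromovHausdorff Metric Set

namespace GHProd

/-! ### Star-shaped gluing of three metric spaces -/

structure Star (ρ : Fin 3 → ℝ) (F : Fin 3 → Type) : Type where
  idx : Fin 3
  pt : F idx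

variable {ρ : Fin 3 → ℝ} {F : Fin 3 → Type} [∀ i, MetricSpace (F i)]

noncomputable def sdist (ρ : Fin 3 → ℝ) {F : Fin 3 → Type} [∀ i, MetricSpace (F i)]
    (p q : Star ρ F) : ℝ :=
  if h : p.idx = q.idx then dist (h ▸ p.pt) q.pt else ρ p.idx + ρ q.idx

theorem sdist_mk_same (i : Fin 3) (x y : F i) :
    sdist ρ (⟨i, x⟩ : Star ρ F) ⟨i, y⟩ = dist x y := dif_pos rfl

theorem sdist_mk_ne {i j : Fin 3} (h : i ≠ j) (x : F i) (y : F j) :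
    sdist ρ (⟨i, x⟩ : Star ρ F) ⟨j, y⟩ = ρ i + ρ j := dif_neg h

theorem sdist_self (p : Star ρ F) : sdist ρ p p = 0 := by
  obtain ⟨i, x⟩ := p; simp [sdist_mk_same]

theorem sdist_comm (p q : Star ρ F) : sdist ρ p q = sdist ρ q p := by
  obtain ⟨i, x⟩ := p; obtain ⟨j, y⟩ := q
  rcases eq_or_ne i j with rfl | h
  · rw [sdist_mk_same, sdist_mk_same, dist_comm]
  · rw [sdist_mk_ne h, sdist_mk_ne h.symm, add_comm]

theorem sdist_triangle (hρ : ∀ i, 0 < ρ i)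
    (hdiam : ∀ (i : Fin 3) (x y : F i), dist x y ≤ 2 * ρ i) (p q r : Star ρ F) :
    sdist ρ p r ≤ sdist ρ p q + sdist ρ q r := by
  obtain ⟨i, x⟩ := p; obtain ⟨j, y⟩ := q; obtain ⟨k, z⟩ := r
  rcases eq_or_ne i j with rfl | hij
  · rcases eq_or_ne i k with rfl | hik
    · rw [sdist_mk_same, sdist_mk_same, sdist_mk_same]; exact dist_triangle _ _ _
    · rw [sdist_mk_same, sdist_mk_ne hik, sdist_mk_ne hik]
      have := dist_nonneg (x := x) (y := y); linarith
  · rcases eq_or_ne j k with rfl | hjk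
    · rw [sdist_mk_ne hij, sdist_mk_ne hij, sdist_mk_same]
      have := dist_nonneg (x := y) (y := z); linarith
    · rcases eq_or_ne i k with rfl | hik
      · rw [sdist_mk_same, sdist_mk_ne hij, sdist_mk_ne hjk]
        have := hdiam i x z; have := hρ j; linarith
      · rw [sdist_mk_ne hik, sdist_mk_ne hij, sdist_mk_ne hjk]
        have := hρ j; linarith

theorem eq_of_sdist_eq_zero (hρ : ∀ i, 0 < ρ i) {p q : Star ρ F}
    (h : sdist ρ p q = 0) : p = q := by
  obtain ⟨i, x⟩ := p; obtain ⟨j, y⟩ := q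
  rcases eq_or_ne i j with rfl | hij
  · rw [sdist_mk_same] at h
    rw [eq_of_dist_eq_zero h]
  · rw [sdist_mk_ne hij] at h
    have := hρ i; have := hρ j; linarith

noncomputable def starMS (hρ : ∀ i, 0 < ρ i)
    (hdiam : ∀ (i : Fin 3) (x y : F i), dist x y ≤ 2 * ρ i) : MetricSpace (Star ρ F) where
  dist := sdist ρ
  dist_self := sdist_self
  dist_comm := sdist_comm
  dist_triangle := sdist_triangle hρ hdiam
  eq_of_dist_eq_zero := eq_of_sdist_eq_zero hρ

theorem star_compactSpace [∀ i, CompactSpace (F i)] (hρ : ∀ i, 0 < ρ i)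
    (hdiam : ∀ (i : Fin 3) (x y : F i), dist x y ≤ 2 * ρ i) :
    @CompactSpace (Star ρ F) (starMS hρ hdiam).toUniformSpace.toTopologicalSpace := by
  letI := starMS hρ hdiam
  constructor
  have h : (univ : Set (Star ρ F)) = ⋃ i, range (fun x : F i => (⟨i, x⟩ : Star ρ F)) := by
    ext s
    simp only [mem_univ, true_iff, mem_iUnion, mem_range]
    obtain ⟨i, x⟩ := s
    exact ⟨i, x, rfl⟩
  rw [h]
  refine isCompact_iUnion fun i => isCompact_range (Isometry.continuous ?_)
  exact Isometry.of_dist_eq fun x y => sdist_mk_same i x y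

theorem sdist_map {F G : Fin 3 → Type} [∀ i, MetricSpace (F i)] [∀ i, MetricSpace (G i)]
    (φ : ∀ i, F i → G i) (hφ : ∀ i (x y : F i), dist (φ i x) (φ i y) = dist x y)
    (s t : Star ρ F) :
    sdist ρ (⟨s.idx, φ s.idx s.pt⟩ : Star ρ G) ⟨t.idx, φ t.idx t.pt⟩ = sdist ρ s t := by
  obtain ⟨i, x⟩ := s; obtain ⟨j, y⟩ := t
  rcases eq_or_ne i j with rfl | h
  · rw [sdist_mk_same, sdist_mk_same, hφ]
  · rw [sdist_mk_ne h, sdist_mk_ne h]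

/-! ### The weights -/

noncomputable def ρD (D : ℝ) : Fin 3 → ℝ := fun i =>
  if i = 0 then 4*D else if i = 1 then 9*D else 19*D

theorem ρD_pos {D : ℝ} (hD : 0 < D) (i : Fin 3) : 0 < ρD D i := by
  fin_cases i <;> simp [ρD] <;> linarith

theorem ρD_ge {D : ℝ} (hD : 0 < D) (i : Fin 3) : 4*D ≤ ρD D i := by
  fin_cases i <;> simp [ρD] <;> linarith

theorem ρD_min_sum {D : ℝ} (hD : 0 < D) {i j : Fin 3} (h : i ≠ j) :
    13*D ≤ ρD D i + ρD D j := by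
  fin_cases i <;> fin_cases j <;> simp_all [ρD] <;> linarith

theorem ρD_sep {D : ℝ} (hD : 0 < D) {i j : Fin 3} (h : i ≠ j) :
    ρD D j + 2*D < ρD D i ∨ ρD D i + 2*D < ρD D j := by
  fin_cases i <;> fin_cases j <;> simp_all [ρD] <;> first | (left; linarith) | (right; linarith)

/-! ### The key combinatorial lemma -/

theorem key {W : Type} [MetricSpace W] {D r : ℝ} (hD : 0 < D) (hrD : r ≤ D)
    (A B : Fin 3 → Set W)
    (hAne : ∀ i, (A i).Nonempty)
    (hdiamB : ∀ i, ∀ b ∈ B i, ∀ b' ∈ B i, dist b b' ≤ D)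
    (hcrossA : ∀ i j, i ≠ j → ∀ a ∈ A i, ∀ a' ∈ A j, dist a a' = ρD D i + ρD D j)
    (hcrossB : ∀ i j, i ≠ j → ∀ b ∈ B i, ∀ b' ∈ B j, dist b b' = ρD D i + ρD D j)
    (hnear : ∀ i, ∀ a ∈ A i, ∃ j, ∃ b ∈ B j, dist a b ≤ r) :
    ∀ i, ∀ a ∈ A i, ∃ b ∈ B i, dist a b ≤ r := by
  intro i a ha
  obtain ⟨j, b, hb, hab⟩ := hnear i a ha
  have hr0 : 0 ≤ r := le_trans dist_nonneg hab
  rcases eq_or_ne j i with rfl | hji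
  · exact ⟨b, hb, hab⟩
  exfalso
  have third : ∀ i' j' : Fin 3, j' ≠ i' → ∃ k, k ≠ i' ∧ k ≠ j' := by decide
  obtain ⟨k, hki, hkj⟩ := third i j hji
  obtain ⟨a', ha'⟩ := hAne k
  obtain ⟨m, b', hb', ha'b'⟩ := hnear k a' ha'
  have haa' : dist a a' = ρD D i + ρD D k := hcrossA i k (Ne.symm hki) a ha a' ha'
  have hsum : 13*D ≤ ρD D i + ρD D k := ρD_min_sum hD (Ne.symm hki)
  have t1 : dist a a' ≤ dist a b + dist b a' := dist_triangle _ _ _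
  have t2 : dist b a' ≤ dist b b' + dist b' a' := dist_triangle _ _ _
  have t3 : dist b b' ≤ dist b a + dist a b' := dist_triangle _ _ _
  have t4 : dist a b' ≤ dist a a' + dist a' b' := dist_triangle _ _ _
  have e1 : dist b' a' = dist a' b' := dist_comm _ _
  have e2 : dist b a = dist a b := dist_comm _ _
  have low : ρD D i + ρD D k - 2*r ≤ dist b b' := by linarith
  have high : dist b b' ≤ ρD D i + ρD D k + 2*r := by linarith
  rcases eq_or_ne m j with rfl | hmj
  · have := hdiamB m b hb b' hb'
    linarith
  · have hbb' : dist b b' = ρD D j + ρD D m := hcrossB j m (Ne.symm hmj) b hb b' hb'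
    have mem2 : ∀ m' i' j' k' : Fin 3,
        j' ≠ i' → k' ≠ i' → k' ≠ j' → m' ≠ j' → m' = i' ∨ m' = k' := by decide
    have hm : m = i ∨ m = k := mem2 m i j k hji hki hkj hmj
    rcases hm with rfl | rfl
    · rcases ρD_sep hD (show j ≠ k from fun h => hkj h.symm) with h | h <;> linarith
    · rcases ρD_sep hD (show j ≠ i from fun h => hji h) with h | h <;> linarith

/-! ### The three-part family attached to a pair of GH-space points -/

noncomputable def Fam (p q : GHSpace) : Fin 3 → Type
  | 0 => p.Rep
  | 1 => q.Rep
  | 2 => PUnit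

noncomputable instance famMS (p q : GHSpace) : ∀ i, MetricSpace (Fam p q i)
  | 0 => inferInstanceAs (MetricSpace p.Rep)
  | 1 => inferInstanceAs (MetricSpace q.Rep)
  | 2 => inferInstanceAs (MetricSpace PUnit)

instance famCS (p q : GHSpace) : ∀ i, CompactSpace (Fam p q i)
  | 0 => inferInstanceAs (CompactSpace p.Rep)
  | 1 => inferInstanceAs (CompactSpace q.Rep)
  | 2 => inferInstanceAs (CompactSpace PUnit)

instance famNE (p q : GHSpace) : ∀ i, Nonempty (Fam p q i)
  | 0 => inferInstanceAs (Nonempty p.Rep)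
  | 1 => inferInstanceAs (Nonempty q.Rep)
  | 2 => inferInstanceAs (Nonempty PUnit)

theorem fam_dist_le {D : ℝ} (hD : 0 ≤ D) {p q : GHSpace}
    (hp : ∀ x y : p.Rep, dist x y ≤ D) (hq : ∀ x y : q.Rep, dist x y ≤ D) :
    ∀ (i : Fin 3) (x y : Fam p q i), dist x y ≤ D
  | 0 => hp
  | 1 => hq
  | 2 => fun x y => by
      have : dist x y = 0 := rfl
      linarith

theorem fam2ρ {D : ℝ} (hD : 0 < D) {p q : GHSpace}
    (hp : ∀ x y : p.Rep, dist x y ≤ D) (hq : ∀ x y : q.Rep, dist x y ≤ D) :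
    ∀ (i : Fin 3) (x y : Fam p q i), dist x y ≤ 2 * ρD D i := fun i x y =>
  le_trans (fam_dist_le hD.le hp hq i x y) (by have := ρD_ge hD i; linarith)

/-! ### the glued space -/

noncomputable def glue {D : ℝ} (hD : 0 < D) (p q : GHSpace)
    (hp : ∀ x y : p.Rep, dist x y ≤ D) (hq : ∀ x y : q.Rep, dist x y ≤ D) : GHSpace :=
  @toGHSpace (Star (ρD D) (Fam p q)) (starMS (ρD_pos hD) (fam2ρ hD hp hq))
    (star_compactSpace (ρD_pos hD) (fam2ρ hD hp hq)) ⟨⟨0, Classical.arbitrary _⟩⟩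

/-! ### couplings -/

theorem exists_near_r (p p' : GHSpace) (x : p.Rep) :
    ∃ x', dist (optimalGHInjl p.Rep p'.Rep x) (optimalGHInjr p.Rep p'.Rep x') ≤ dist p p' := by
  have hopt : hausdorffDist (range (optimalGHInjl p.Rep p'.Rep))
      (range (optimalGHInjr p.Rep p'.Rep)) = dist p p' := by
    rw [hausdorffDist_optimal]; exact (dist_ghDist p p').symm
  have hcl : IsCompact (range (optimalGHInjl p.Rep p'.Rep)) :=
    isCompact_range (isometry_optimalGHInjl _ _).continuous
  have hcr : IsCompact (range (optimalGHInjr p.Rep p'.Rep)) :=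
    isCompact_range (isometry_optimalGHInjr _ _).continuous
  have hne : EMetric.hausdorffEdist (range (optimalGHInjl p.Rep p'.Rep))
      (range (optimalGHInjr p.Rep p'.Rep)) ≠ ⊤ :=
    hausdorffEdist_ne_top_of_nonempty_of_bounded (range_nonempty _) (range_nonempty _)
      hcl.isBounded hcr.isBounded
  obtain ⟨b, hb, hbd⟩ := hcr.exists_infDist_eq_dist (range_nonempty _)
    (optimalGHInjl p.Rep p'.Rep x)
  obtain ⟨x', rfl⟩ := hb
  refine ⟨x', ?_⟩
  rw [← hbd, ← hopt]
  exact infDist_le_hausdorffDist_of_mem (mem_range_self _) hne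

theorem exists_near_l (p p' : GHSpace) (x' : p'.Rep) :
    ∃ x, dist (optimalGHInjl p.Rep p'.Rep x) (optimalGHInjr p.Rep p'.Rep x') ≤ dist p p' := by
  have hopt : hausdorffDist (range (optimalGHInjr p.Rep p'.Rep))
      (range (optimalGHInjl p.Rep p'.Rep)) = dist p p' := by
    rw [hausdorffDist_comm, hausdorffDist_optimal]; exact (dist_ghDist p p').symm
  have hcl : IsCompact (range (optimalGHInjl p.Rep p'.Rep)) :=
    isCompact_range (isometry_optimalGHInjl _ _).continuous
  have hcr : IsCompact (range (optimalGHInjr p.Rep p'.Rep)) :=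
    isCompact_range (isometry_optimalGHInjr _ _).continuous
  have hne : EMetric.hausdorffEdist (range (optimalGHInjr p.Rep p'.Rep))
      (range (optimalGHInjl p.Rep p'.Rep)) ≠ ⊤ :=
    hausdorffEdist_ne_top_of_nonempty_of_bounded (range_nonempty _) (range_nonempty _)
      hcr.isBounded hcl.isBounded
  obtain ⟨b, hb, hbd⟩ := hcl.exists_infDist_eq_dist (range_nonempty _)
    (optimalGHInjr p.Rep p'.Rep x')
  obtain ⟨x, rfl⟩ := hb
  refine ⟨x, ?_⟩
  rw [dist_comm, ← hbd, ← hopt]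
  exact infDist_le_hausdorffDist_of_mem (mem_range_self _) hne

theorem rep_dist_le (p q : GHSpace) (x y : p.Rep) :
    dist x y ≤ Metric.diam (univ : Set q.Rep) + 2 * dist p q := by
  obtain ⟨x', hx'⟩ := exists_near_r p q x
  obtain ⟨y', hy'⟩ := exists_near_r p q y
  have e1 : dist x y = dist (optimalGHInjl p.Rep q.Rep x) (optimalGHInjl p.Rep q.Rep y) :=
    ((isometry_optimalGHInjl _ _).dist_eq _ _).symm
  have e2 : dist (optimalGHInjr p.Rep q.Rep x') (optimalGHInjr p.Rep q.Rep y') = dist x' y' :=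
    (isometry_optimalGHInjr _ _).dist_eq _ _
  have h3 : dist x' y' ≤ Metric.diam (univ : Set q.Rep) :=
    dist_le_diam_of_mem isCompact_univ.isBounded (mem_univ _) (mem_univ _)
  have t := dist_triangle4 (optimalGHInjl p.Rep q.Rep x) (optimalGHInjr p.Rep q.Rep x')
    (optimalGHInjr p.Rep q.Rep y') (optimalGHInjl p.Rep q.Rep y)
  have e4 : dist (optimalGHInjr p.Rep q.Rep y') (optimalGHInjl p.Rep q.Rep y)
      = dist (optimalGHInjl p.Rep q.Rep y) (optimalGHInjr p.Rep q.Rep y') := dist_comm _ _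
  linarith

noncomputable def coupSet (p p' : GHSpace) : Set (OptimalGHCoupling p.Rep p'.Rep) :=
  range (optimalGHInjl p.Rep p'.Rep) ∪ range (optimalGHInjr p.Rep p'.Rep)

theorem coupSet_compact (p p' : GHSpace) : IsCompact (coupSet p p') :=
  (isCompact_range (isometry_optimalGHInjl _ _).continuous).union
    (isCompact_range (isometry_optimalGHInjr _ _).continuous)

theorem coupSet_dist_le {D : ℝ} {p p' : GHSpace} (hp : ∀ x y : p.Rep, dist x y ≤ D)
    (hp' : ∀ x y : p'.Rep, dist x y ≤ D) (hpp' : dist p p' ≤ D)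
    (z w : ↥(coupSet p p')) : dist z w ≤ 2*D := by
  have hD0 : 0 ≤ D := le_trans dist_nonneg hpp'
  obtain ⟨z, hz⟩ := z; obtain ⟨w, hw⟩ := w
  show dist z w ≤ 2*D
  rcases hz with ⟨x, rfl⟩ | ⟨x', rfl⟩ <;> rcases hw with ⟨y, rfl⟩ | ⟨y', rfl⟩
  · rw [(isometry_optimalGHInjl _ _).dist_eq]
    have := hp x y; linarith
  · obtain ⟨c, hc⟩ := exists_near_r p p' x
    have t := dist_triangle (optimalGHInjl p.Rep p'.Rep x) (optimalGHInjr p.Rep p'.Rep c)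
      (optimalGHInjr p.Rep p'.Rep y')
    rw [(isometry_optimalGHInjr _ _).dist_eq] at t
    have := hp' c y'; linarith
  · obtain ⟨c, hc⟩ := exists_near_l p p' x'
    have t := dist_triangle (optimalGHInjr p.Rep p'.Rep x') (optimalGHInjl p.Rep p'.Rep c)
      (optimalGHInjl p.Rep p'.Rep y)
    rw [(isometry_optimalGHInjl _ _).dist_eq] at t
    rw [dist_comm] at hc
    have := hp c y; linarith
  · rw [(isometry_optimalGHInjr _ _).dist_eq]
    have := hp' x' y'; linarith

noncomputable def FamZ (p q p' q' : GHSpace) : Fin 3 → Type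
  | 0 => ↥(coupSet p p')
  | 1 => ↥(coupSet q q')
  | 2 => PUnit

noncomputable instance famZMS (p q p' q' : GHSpace) : ∀ i, MetricSpace (FamZ p q p' q' i)
  | 0 => inferInstanceAs (MetricSpace ↥(coupSet p p'))
  | 1 => inferInstanceAs (MetricSpace ↥(coupSet q q'))
  | 2 => inferInstanceAs (MetricSpace PUnit)

theorem famZ_dist_le {D : ℝ} {p q p' q' : GHSpace}
    (hp : ∀ x y : p.Rep, dist x y ≤ D) (hq : ∀ x y : q.Rep, dist x y ≤ D)
    (hp' : ∀ x y : p'.Rep, dist x y ≤ D) (hq' : ∀ x y : q'.Rep, dist x y ≤ D)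
    (hpp' : dist p p' ≤ D) (hqq' : dist q q' ≤ D) :
    ∀ (i : Fin 3) (z w : FamZ p q p' q' i), dist z w ≤ 2*D
  | 0 => coupSet_dist_le hp hp' hpp'
  | 1 => coupSet_dist_le hq hq' hqq'
  | 2 => fun z w => by
      have h0 : 0 ≤ D := le_trans dist_nonneg hpp'
      have : dist z w = 0 := rfl
      linarith

theorem famZ2ρ {D : ℝ} (hD : 0 < D) {p q p' q' : GHSpace}
    (hp : ∀ x y : p.Rep, dist x y ≤ D) (hq : ∀ x y : q.Rep, dist x y ≤ D)
    (hp' : ∀ x y : p'.Rep, dist x y ≤ D) (hq' : ∀ x y : q'.Rep, dist x y ≤ D)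
    (hpp' : dist p p' ≤ D) (hqq' : dist q q' ≤ D) :
    ∀ (i : Fin 3) (z w : FamZ p q p' q' i), dist z w ≤ 2 * ρD D i := fun i z w =>
  le_trans (famZ_dist_le hp hq hp' hq' hpp' hqq' i z w) (by have := ρD_ge hD i; linarith)

noncomputable def φmap (p q p' q' : GHSpace) : ∀ i, Fam p q i → FamZ p q p' q' i
  | 0 => fun x => ⟨optimalGHInjl p.Rep p'.Rep x, Or.inl (mem_range_self _)⟩
  | 1 => fun y => ⟨optimalGHInjl q.Rep q'.Rep y, Or.inl (mem_range_self _)⟩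
  | 2 => fun u => u

noncomputable def ψmap (p q p' q' : GHSpace) : ∀ i, Fam p' q' i → FamZ p q p' q' i
  | 0 => fun x => ⟨optimalGHInjr p.Rep p'.Rep x, Or.inr (mem_range_self _)⟩
  | 1 => fun y => ⟨optimalGHInjr q.Rep q'.Rep y, Or.inr (mem_range_self _)⟩
  | 2 => fun u => u

theorem φmap_isom (p q p' q' : GHSpace) :
    ∀ i (x y : Fam p q i), dist (φmap p q p' q' i x) (φmap p q p' q' i y) = dist x y
  | 0 => fun x y => (isometry_optimalGHInjl p.Rep p'.Rep).dist_eq x y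
  | 1 => fun x y => (isometry_optimalGHInjl q.Rep q'.Rep).dist_eq x y
  | 2 => fun x y => rfl

theorem ψmap_isom (p q p' q' : GHSpace) :
    ∀ i (x y : Fam p' q' i), dist (ψmap p q p' q' i x) (ψmap p q p' q' i y) = dist x y
  | 0 => fun x y => (isometry_optimalGHInjr p.Rep p'.Rep).dist_eq x y
  | 1 => fun x y => (isometry_optimalGHInjr q.Rep q'.Rep).dist_eq x y
  | 2 => fun x y => rfl


theorem glue_le {D : ℝ} (hD : 0 < D) (p q p' q' : GHSpace)
    (hp : ∀ x y : p.Rep, dist x y ≤ D) (hq : ∀ x y : q.Rep, dist x y ≤ D)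
    (hp' : ∀ x y : p'.Rep, dist x y ≤ D) (hq' : ∀ x y : q'.Rep, dist x y ≤ D)
    (hpp' : dist p p' ≤ D) (hqq' : dist q q' ≤ D) :
    dist (glue hD p q hp hq) (glue hD p' q' hp' hq') ≤ max (dist p p') (dist q q') := by
  letI MA := starMS (ρD_pos hD) (fam2ρ hD hp hq)
  letI MB := starMS (ρD_pos hD) (fam2ρ hD hp' hq')
  letI MZ := starMS (ρD_pos hD) (famZ2ρ hD hp hq hp' hq' hpp' hqq')
  haveI := star_compactSpace (ρD_pos hD) (fam2ρ hD hp hq)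
  haveI := star_compactSpace (ρD_pos hD) (fam2ρ hD hp' hq')
  haveI : Nonempty (Star (ρD D) (Fam p q)) := ⟨⟨0, Classical.arbitrary _⟩⟩
  haveI : Nonempty (Star (ρD D) (Fam p' q')) := ⟨⟨0, Classical.arbitrary _⟩⟩
  set m := max (dist p p') (dist q q') with hm
  have hm0 : 0 ≤ m := le_trans dist_nonneg (le_max_left _ _)
  have hpm : dist p p' ≤ m := le_max_left _ _
  have hqm : dist q q' ≤ m := le_max_right _ _
  set Φ : Star (ρD D) (Fam p q) → Star (ρD D) (FamZ p q p' q') :=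
    (fun s => ⟨s.idx, φmap p q p' q' s.idx s.pt⟩) with hΦdef
  set Ψ : Star (ρD D) (Fam p' q') → Star (ρD D) (FamZ p q p' q') :=
    (fun s => ⟨s.idx, ψmap p q p' q' s.idx s.pt⟩) with hΨdef
  have isoΦ : Isometry Φ :=
    Isometry.of_dist_eq fun s t => sdist_map (φmap p q p' q') (φmap_isom p q p' q') s t
  have isoΨ : Isometry Ψ :=
    Isometry.of_dist_eq fun s t => sdist_map (ψmap p q p' q') (ψmap_isom p q p' q') s t
  have H : hausdorffDist (range Φ) (range Ψ) ≤ m := by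
    apply hausdorffDist_le_of_mem_dist hm0
    · rintro _ ⟨s, rfl⟩
      obtain ⟨⟨v, hv⟩, x⟩ := s
      interval_cases v
      · obtain ⟨x', hx'⟩ := exists_near_r p p' x
        refine ⟨Ψ ⟨⟨0, by omega⟩, x'⟩, mem_range_self _, ?_⟩
        have e : dist (Φ ⟨⟨0, hv⟩, x⟩) (Ψ ⟨⟨0, by omega⟩, x'⟩)
            = dist (optimalGHInjl p.Rep p'.Rep x) (optimalGHInjr p.Rep p'.Rep x') :=
          sdist_mk_same _ _ _
        rw [e]; exact le_trans hx' hpm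
      · obtain ⟨x', hx'⟩ := exists_near_r q q' x
        refine ⟨Ψ ⟨⟨1, by omega⟩, x'⟩, mem_range_self _, ?_⟩
        have e : dist (Φ ⟨⟨1, hv⟩, x⟩) (Ψ ⟨⟨1, by omega⟩, x'⟩)
            = dist (optimalGHInjl q.Rep q'.Rep x) (optimalGHInjr q.Rep q'.Rep x') :=
          sdist_mk_same _ _ _
        rw [e]; exact le_trans hx' hqm
      · refine ⟨Ψ ⟨⟨2, by omega⟩, PUnit.unit⟩, mem_range_self _, ?_⟩
        have e : dist (Φ ⟨⟨2, hv⟩, x⟩) (Ψ ⟨⟨2, by omega⟩, PUnit.unit⟩) = (0 : ℝ) :=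
          sdist_mk_same _ _ _
        rw [e]; exact hm0
    · rintro _ ⟨s, rfl⟩
      obtain ⟨⟨v, hv⟩, x⟩ := s
      interval_cases v
      · obtain ⟨x', hx'⟩ := exists_near_l p p' x
        refine ⟨Φ ⟨⟨0, by omega⟩, x'⟩, mem_range_self _, ?_⟩
        have e : dist (Ψ ⟨⟨0, hv⟩, x⟩) (Φ ⟨⟨0, by omega⟩, x'⟩)
            = dist (optimalGHInjr p.Rep p'.Rep x) (optimalGHInjl p.Rep p'.Rep x') :=
          sdist_mk_same _ _ _
        rw [e, dist_comm]; exact le_trans hx' hpm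
      · obtain ⟨x', hx'⟩ := exists_near_l q q' x
        refine ⟨Φ ⟨⟨1, by omega⟩, x'⟩, mem_range_self _, ?_⟩
        have e : dist (Ψ ⟨⟨1, hv⟩, x⟩) (Φ ⟨⟨1, by omega⟩, x'⟩)
            = dist (optimalGHInjr q.Rep q'.Rep x) (optimalGHInjl q.Rep q'.Rep x') :=
          sdist_mk_same _ _ _
        rw [e, dist_comm]; exact le_trans hx' hqm
      · refine ⟨Φ ⟨⟨2, by omega⟩, PUnit.unit⟩, mem_range_self _, ?_⟩
        have e : dist (Ψ ⟨⟨2, hv⟩, x⟩) (Φ ⟨⟨2, by omega⟩, PUnit.unit⟩) = (0 : ℝ) :=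
          sdist_mk_same _ _ _
        rw [e]; exact hm0
  exact le_trans (ghDist_le_hausdorffDist isoΦ isoΨ) H


theorem le_glue {D : ℝ} (hD : 0 < D) (p q p' q' : GHSpace)
    (hp : ∀ x y : p.Rep, dist x y ≤ D) (hq : ∀ x y : q.Rep, dist x y ≤ D)
    (hp' : ∀ x y : p'.Rep, dist x y ≤ D) (hq' : ∀ x y : q'.Rep, dist x y ≤ D)
    (hr : dist (glue hD p q hp hq) (glue hD p' q' hp' hq') ≤ D) :
    max (dist p p') (dist q q') ≤ dist (glue hD p q hp hq) (glue hD p' q' hp' hq') := by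
  letI MA := starMS (ρD_pos hD) (fam2ρ hD hp hq)
  letI MB := starMS (ρD_pos hD) (fam2ρ hD hp' hq')
  haveI := star_compactSpace (ρD_pos hD) (fam2ρ hD hp hq)
  haveI := star_compactSpace (ρD_pos hD) (fam2ρ hD hp' hq')
  haveI : Nonempty (Star (ρD D) (Fam p q)) := ⟨⟨0, Classical.arbitrary _⟩⟩
  haveI : Nonempty (Star (ρD D) (Fam p' q')) := ⟨⟨0, Classical.arbitrary _⟩⟩
  obtain ⟨Φ, Ψ, hΦ, hΨ, hdd⟩ :=
    ghDist_eq_hausdorffDist (Star (ρD D) (Fam p q)) (Star (ρD D) (Fam p' q'))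
  set r := dist (glue hD p q hp hq) (glue hD p' q' hp' hq') with hrdef
  have hr0 : 0 ≤ r := dist_nonneg
  have hdd' : hausdorffDist (range Φ) (range Ψ) = r := by
    rw [← hdd]; rfl
  set A := fun i : Fin 3 => range (fun x : Fam p q i => Φ ⟨i, x⟩) with hA
  set B := fun i : Fin 3 => range (fun x : Fam p' q' i => Ψ ⟨i, x⟩) with hB
  have hcΦ : IsCompact (range Φ) := isCompact_range hΦ.continuous
  have hcΨ : IsCompact (range Ψ) := isCompact_range hΨ.continuous
  have hedist : EMetric.hausdorffEdist (range Φ) (range Ψ) ≠ ⊤ :=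
    hausdorffEdist_ne_top_of_nonempty_of_bounded (range_nonempty _) (range_nonempty _)
      hcΦ.isBounded hcΨ.isBounded
  have hedist' : EMetric.hausdorffEdist (range Ψ) (range Φ) ≠ ⊤ := by
    unfold EMetric.hausdorffEdist at hedist ⊢
    rwa [EMetric.hausdorffEdist_comm]
  have hnear1 : ∀ i, ∀ a ∈ A i, ∃ j, ∃ b ∈ B j, dist a b ≤ r := by
    rintro i _ ⟨x, rfl⟩
    have h1 : infDist (Φ ⟨i, x⟩) (range Ψ) ≤ r := by
      rw [← hdd']; exact infDist_le_hausdorffDist_of_mem (mem_range_self _) hedist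
    obtain ⟨b, hbmem, hbd⟩ := hcΨ.exists_infDist_eq_dist (range_nonempty _) (Φ ⟨i, x⟩)
    obtain ⟨t, rfl⟩ := hbmem
    exact ⟨t.idx, Ψ t, ⟨t.pt, rfl⟩, by rw [← hbd]; exact h1⟩
  have hnear2 : ∀ i, ∀ b ∈ B i, ∃ j, ∃ a ∈ A j, dist b a ≤ r := by
    rintro i _ ⟨x, rfl⟩
    have h1 : infDist (Ψ ⟨i, x⟩) (range Φ) ≤ r := by
      rw [← hdd', hausdorffDist_comm]
      exact infDist_le_hausdorffDist_of_mem (mem_range_self _) hedist'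
    obtain ⟨b, hbmem, hbd⟩ := hcΦ.exists_infDist_eq_dist (range_nonempty _) (Ψ ⟨i, x⟩)
    obtain ⟨t, rfl⟩ := hbmem
    exact ⟨t.idx, Φ t, ⟨t.pt, rfl⟩, by rw [← hbd]; exact h1⟩
  have hcrossA : ∀ i j, i ≠ j → ∀ a ∈ A i, ∀ a' ∈ A j, dist a a' = ρD D i + ρD D j := by
    rintro i j hij _ ⟨x, rfl⟩ _ ⟨y, rfl⟩
    rw [hΦ.dist_eq]
    exact sdist_mk_ne hij x y
  have hcrossB : ∀ i j, i ≠ j → ∀ b ∈ B i, ∀ b' ∈ B j, dist b b' = ρD D i + ρD D j := by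
    rintro i j hij _ ⟨x, rfl⟩ _ ⟨y, rfl⟩
    rw [hΨ.dist_eq]
    exact sdist_mk_ne hij x y
  have hdiamA : ∀ i, ∀ a ∈ A i, ∀ a' ∈ A i, dist a a' ≤ D := by
    rintro i _ ⟨x, rfl⟩ _ ⟨y, rfl⟩
    rw [hΦ.dist_eq]
    have e : dist (⟨i, x⟩ : Star (ρD D) (Fam p q)) ⟨i, y⟩ = dist x y := sdist_mk_same i x y
    rw [e]
    exact fam_dist_le hD.le hp hq i x y
  have hdiamB : ∀ i, ∀ b ∈ B i, ∀ b' ∈ B i, dist b b' ≤ D := by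
    rintro i _ ⟨x, rfl⟩ _ ⟨y, rfl⟩
    rw [hΨ.dist_eq]
    have e : dist (⟨i, x⟩ : Star (ρD D) (Fam p' q')) ⟨i, y⟩ = dist x y := sdist_mk_same i x y
    rw [e]
    exact fam_dist_le hD.le hp' hq' i x y
  have hAne : ∀ i, (A i).Nonempty := fun i => ⟨Φ ⟨i, Classical.arbitrary _⟩, ⟨_, rfl⟩⟩
  have hBne : ∀ i, (B i).Nonempty := fun i => ⟨Ψ ⟨i, Classical.arbitrary _⟩, ⟨_, rfl⟩⟩
  have k1 := key hD hr A B hAne hdiamB hcrossA hcrossB hnear1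
  have k2 := key hD hr B A hBne hdiamA hcrossB hcrossA hnear2
  have hHi : ∀ i, hausdorffDist (A i) (B i) ≤ r := fun i =>
    hausdorffDist_le_of_infDist hr0
      (fun a ha => by
        obtain ⟨b, hb, hd⟩ := k1 i a ha
        exact le_trans (infDist_le_dist_of_mem hb) hd)
      (fun b hb => by
        obtain ⟨a, ha, hd⟩ := k2 i b hb
        exact le_trans (infDist_le_dist_of_mem ha) hd)
  have c1 : dist p p' ≤ r := by
    have iso1 : Isometry (fun x : p.Rep => Φ ⟨0, x⟩) :=
      Isometry.of_dist_eq fun x y => by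
        rw [hΦ.dist_eq]; exact sdist_mk_same (F := Fam p q) 0 x y
    have iso2 : Isometry (fun x : p'.Rep => Ψ ⟨0, x⟩) :=
      Isometry.of_dist_eq fun x y => by
        rw [hΨ.dist_eq]; exact sdist_mk_same (F := Fam p' q') 0 x y
    have h5 := ghDist_le_hausdorffDist iso1 iso2
    rw [dist_ghDist]
    exact le_trans h5 (hHi 0)
  have c2 : dist q q' ≤ r := by
    have iso1 : Isometry (fun x : q.Rep => Φ ⟨1, x⟩) :=
      Isometry.of_dist_eq fun x y => by
        rw [hΦ.dist_eq]; exact sdist_mk_same (F := Fam p q) 1 x y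
    have iso2 : Isometry (fun x : q'.Rep => Ψ ⟨1, x⟩) :=
      Isometry.of_dist_eq fun x y => by
        rw [hΨ.dist_eq]; exact sdist_mk_same (F := Fam p' q') 1 x y
    have h5 := ghDist_le_hausdorffDist iso1 iso2
    rw [dist_ghDist]
    exact le_trans h5 (hHi 1)
  exact max_le c1 c2

end GHProd

open GHProd in
/-- For bounded subsets `𝒳, 𝒴` of the Gromov–Hausdorff space, the
product `𝒳 × 𝒴` with the `ℓ^∞` (maximum) product distance embeds isometrically
into the Gromov–Hausdorff space. -/
theorem bounded_subsets_linfty_prod_embeds (𝒳 𝒴 : Set GHSpace)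
    (h𝒳 : Bornology.IsBounded 𝒳) (h𝒴 : Bornology.IsBounded 𝒴) :
    ∃ f : 𝒳 × 𝒴 → GHSpace,
      ∀ (X X' : 𝒳) (Y Y' : 𝒴),
        dist (f (X, Y)) (f (X', Y')) =
          max (dist (X : GHSpace) (X' : GHSpace)) (dist (Y : GHSpace) (Y' : GHSpace)) := by
  classical
  rcases isEmpty_or_nonempty ↥𝒳 with hE | hne𝒳
  · exact ⟨fun _ => toGHSpace PUnit.{1}, fun X => hE.elim X⟩
  rcases isEmpty_or_nonempty ↥𝒴 with hE | hne𝒴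
  · exact ⟨fun _ => toGHSpace PUnit.{1}, fun X X' Y => hE.elim Y⟩
  obtain ⟨X₀⟩ := hne𝒳
  obtain ⟨Y₀⟩ := hne𝒴
  obtain ⟨CX, hCX⟩ := Metric.isBounded_iff.1 h𝒳
  obtain ⟨CY, hCY⟩ := Metric.isBounded_iff.1 h𝒴
  set D := Metric.diam (univ : Set (X₀ : GHSpace).Rep)
    + Metric.diam (univ : Set (Y₀ : GHSpace).Rep) + 3*|CX| + 3*|CY| + 1 with hDdef
  have d1 : 0 ≤ Metric.diam (univ : Set (X₀ : GHSpace).Rep) := Metric.diam_nonneg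
  have d2 : 0 ≤ Metric.diam (univ : Set (Y₀ : GHSpace).Rep) := Metric.diam_nonneg
  have a1 : 0 ≤ |CX| := abs_nonneg _
  have a2 : 0 ≤ |CY| := abs_nonneg _
  have hD : 0 < D := by rw [hDdef]; linarith
  have hdX : ∀ X X' : ↥𝒳, dist (X : GHSpace) (X' : GHSpace) ≤ D := by
    intro X X'
    have h := hCX X.2 X'.2
    have := le_abs_self CX
    rw [hDdef]; linarith
  have hdY : ∀ Y Y' : ↥𝒴, dist (Y : GHSpace) (Y' : GHSpace) ≤ D := by
    intro Y Y'
    have h := hCY Y.2 Y'.2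
    have := le_abs_self CY
    rw [hDdef]; linarith
  have hrepX : ∀ X : ↥𝒳, ∀ x y : (X : GHSpace).Rep, dist x y ≤ D := by
    intro X x y
    have h := rep_dist_le (X : GHSpace) (X₀ : GHSpace) x y
    have h2 := hCX X.2 X₀.2
    have h3 : 0 ≤ dist (X : GHSpace) (X₀ : GHSpace) := dist_nonneg
    have := le_abs_self CX
    rw [hDdef]; linarith
  have hrepY : ∀ Y : ↥𝒴, ∀ x y : (Y : GHSpace).Rep, dist x y ≤ D := by
    intro Y x y
    have h := rep_dist_le (Y : GHSpace) (Y₀ : GHSpace) x y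
    have h2 := hCY Y.2 Y₀.2
    have h3 : 0 ≤ dist (Y : GHSpace) (Y₀ : GHSpace) := dist_nonneg
    have := le_abs_self CY
    rw [hDdef]; linarith
  refine ⟨fun z => glue hD (z.1 : GHSpace) (z.2 : GHSpace) (hrepX z.1) (hrepY z.2), ?_⟩
  intro X X' Y Y'
  have up := glue_le hD (X : GHSpace) (Y : GHSpace) (X' : GHSpace) (Y' : GHSpace)
    (hrepX X) (hrepY Y) (hrepX X') (hrepY Y') (hdX X X') (hdY Y Y')
  have hrD : dist (glue hD (X : GHSpace) (Y : GHSpace) (hrepX X) (hrepY Y))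
      (glue hD (X' : GHSpace) (Y' : GHSpace) (hrepX X') (hrepY Y')) ≤ D :=
    le_trans up (max_le (hdX X X') (hdY Y Y'))
  have lo := le_glue hD (X : GHSpace) (Y : GHSpace) (X' : GHSpace) (Y' : GHSpace)
    (hrepX X) (hrepY Y) (hrepX X') (hrepY Y') hrD
  exact le_antisymm up lo
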